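/- One has the identity M(u;ũ)⁻¹ σ³ M(u;ũ) = (θ₁₁(u)θ₁₁(ũ))⁻¹ · [[-θ₀₁(u)θ₀₁(ũ), -θ₀₁·θ₀₁(u+ũ)], [θ₀₁·θ₀₁(u-ũ), θ₀₁(u)θ₀₁(ũ)]], valid whenever det M(u;ũ) ≠ 0. -/

import Mathlib

open Complex Matrix

/-- Jacobi theta function with characteristics `a, b ∈ {0,1}`. -/
noncomputable def jTheta (a b : ℤ) (u τ : ℂ) : ℂ :=
  ∑' n : ℤ, Complex.exp (Real.pi * Complex.I * ((n : ℂ) + a / 2) ^ 2 * τ +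
    2 * Real.pi * Complex.I * ((n : ℂ) + a / 2) * (u + b / 2))

/-- The gauge-transformation matrix `M(u;ũ)`. -/
noncomputable def gaugeM (τ u utilde : ℂ) : Matrix (Fin 2) (Fin 2) ℂ :=
  !![ - jTheta 0 1 ((u - utilde) / 2) (τ / 2), - jTheta 0 1 ((u + utilde) / 2) (τ / 2);
      jTheta 0 0 ((u - utilde) / 2) (τ / 2), jTheta 0 0 ((u + utilde) / 2) (τ / 2)]


open scoped Real in
lemma jTheta_eq (a b : ℤ) (u τ : ℂ) :
    jTheta a b u τ = Complex.exp (π * I * τ * a ^ 2 / 4 + π * I * a * (u + b / 2)) *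
      jacobiTheta₂ (u + b / 2 + a * τ / 2) τ := by
  rw [jacobiTheta₂, ← tsum_mul_left, jTheta]
  refine tsum_congr fun n => ?_
  rw [jacobiTheta₂_term, ← Complex.exp_add]
  congr 1
  ring

open scoped Real in
lemma jT00 (u τ : ℂ) : jTheta 0 0 u τ = jacobiTheta₂ u τ := by
  rw [jTheta_eq]; push_cast; norm_num

open scoped Real in
lemma jT01 (u τ : ℂ) : jTheta 0 1 u τ = jacobiTheta₂ (u + 1 / 2) τ := by
  rw [jTheta_eq]; push_cast; norm_num

open scoped Real in
lemma jT11 (u τ : ℂ) : jTheta 1 1 u τ =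
    Complex.exp (π * I * τ / 4 + π * I * (u + 1 / 2)) * jacobiTheta₂ (u + 1 / 2 + τ / 2) τ := by
  rw [jTheta_eq]; push_cast; ring_nf

def pairEquiv : Bool × ℤ × ℤ ≃ ℤ × ℤ where
  toFun x := (x.2.1 + x.2.2 + cond x.1 1 0, x.2.1 - x.2.2)
  invFun mn := if (mn.1 + mn.2) % 2 = 0
    then (false, ((mn.1 + mn.2) / 2, (mn.1 - mn.2) / 2))
    else (true, ((mn.1 + mn.2 - 1) / 2, (mn.1 - mn.2 - 1) / 2))
  left_inv := by
    rintro ⟨b, p, q⟩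
    rcases b <;> dsimp only [Bool.cond_false, Bool.cond_true, cond_false, cond_true] <;>
        [rw [if_pos (by omega)]; rw [if_neg (by omega)]] <;>
      simp only [Prod.mk.injEq] <;> exact ⟨trivial, by omega, by omega⟩
  right_inv := by
    rintro ⟨m, n⟩
    dsimp only
    by_cases h : (m + n) % 2 = 0
    · rw [if_pos h]
      simp only [Prod.mk.injEq, Bool.cond_false, Bool.cond_true]
      constructor <;> omega
    · rw [if_neg h]
      simp only [Prod.mk.injEq, Bool.cond_false, Bool.cond_true]
      constructor <;> omega

set_option maxHeartbeats 2000000 in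
open scoped Real in
lemma theta2_landen {τ : ℂ} (hτ : 0 < τ.im) (X Y : ℂ) :
    jacobiTheta₂ X τ * jacobiTheta₂ Y τ =
      jacobiTheta₂ (X + Y) (2 * τ) * jacobiTheta₂ (X - Y) (2 * τ) +
      Complex.exp (π * I * τ + 2 * π * I * X) *
        (jacobiTheta₂ (X + Y + τ) (2 * τ) * jacobiTheta₂ (X - Y + τ) (2 * τ)) := by
  have h2τ : 0 < (2 * τ).im := by
    have h : (2 * τ).im = 2 * τ.im := by simp
    rw [h]; linarith
  have nrm : ∀ (z : ℂ) (σ : ℂ), 0 < σ.im → Summable fun n : ℤ => ‖jacobiTheta₂_term n z σ‖ :=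
    fun z σ hσ => summable_norm_iff.mpr ((summable_jacobiTheta₂_term_iff z σ).mpr hσ)
  have hXn := nrm X τ hτ
  have hYn := nrm Y τ hτ
  have prod_eq : ∀ (z w σ : ℂ), 0 < σ.im → jacobiTheta₂ z σ * jacobiTheta₂ w σ =
      ∑' pq : ℤ × ℤ, jacobiTheta₂_term pq.1 z σ * jacobiTheta₂_term pq.2 w σ := by
    intro z w σ hσ
    rw [jacobiTheta₂, jacobiTheta₂]
    exact tsum_mul_tsum_of_summable_norm (nrm z σ hσ) (nrm w σ hσ)
  have hF : Summable fun mn : ℤ × ℤ => jacobiTheta₂_term mn.1 X τ * jacobiTheta₂_term mn.2 Y τ :=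
    summable_mul_of_summable_norm (f := fun n : ℤ => jacobiTheta₂_term n X τ)
      (g := fun n : ℤ => jacobiTheta₂_term n Y τ) hXn hYn
  have hFe : Summable fun x : Bool × ℤ × ℤ =>
      jacobiTheta₂_term (pairEquiv x).1 X τ * jacobiTheta₂_term (pairEquiv x).2 Y τ :=
    pairEquiv.summable_iff.mpr hF
  have hfalse : (∑' pq : ℤ × ℤ,
        jacobiTheta₂_term (pairEquiv (false, pq)).1 X τ *
          jacobiTheta₂_term (pairEquiv (false, pq)).2 Y τ) =
      jacobiTheta₂ (X + Y) (2 * τ) * jacobiTheta₂ (X - Y) (2 * τ) := by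
    rw [prod_eq _ _ _ h2τ]
    refine tsum_congr fun pq => ?_
    simp only [pairEquiv, Equiv.coe_fn_mk, Bool.cond_false, add_zero,
      jacobiTheta₂_term, ← Complex.exp_add]
    congr 1
    push_cast
    ring
  have htrue : (∑' pq : ℤ × ℤ,
        jacobiTheta₂_term (pairEquiv (true, pq)).1 X τ *
          jacobiTheta₂_term (pairEquiv (true, pq)).2 Y τ) =
      Complex.exp (π * I * τ + 2 * π * I * X) *
        (jacobiTheta₂ (X + Y + τ) (2 * τ) * jacobiTheta₂ (X - Y + τ) (2 * τ)) := by
    rw [prod_eq _ _ _ h2τ, ← tsum_mul_left]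
    refine tsum_congr fun pq => ?_
    simp only [pairEquiv, Equiv.coe_fn_mk, Bool.cond_true, jacobiTheta₂_term, ← Complex.exp_add]
    congr 1
    push_cast
    ring
  calc jacobiTheta₂ X τ * jacobiTheta₂ Y τ
      = ∑' mn : ℤ × ℤ, jacobiTheta₂_term mn.1 X τ * jacobiTheta₂_term mn.2 Y τ :=
        prod_eq _ _ _ hτ
    _ = ∑' x : Bool × ℤ × ℤ,
          jacobiTheta₂_term (pairEquiv x).1 X τ * jacobiTheta₂_term (pairEquiv x).2 Y τ :=
        (pairEquiv.tsum_eq _).symm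
    _ = ∑' b : Bool, ∑' pq : ℤ × ℤ,
          jacobiTheta₂_term (pairEquiv (b, pq)).1 X τ *
            jacobiTheta₂_term (pairEquiv (b, pq)).2 Y τ := Summable.tsum_prod' hFe hFe.prod_factor
    _ = _ := by rw [tsum_bool, hfalse, htrue]

open scoped Real in
lemma jTheta11_zero (τ : ℂ) : jTheta 1 1 0 τ = 0 := by
  have key : ∀ n : ℤ, Complex.exp (π * I * (((-1 - n : ℤ) : ℂ) + (1:ℤ) / 2) ^ 2 * τ +
      2 * π * I * (((-1 - n : ℤ) : ℂ) + (1:ℤ) / 2) * ((0:ℂ) + (1:ℤ) / 2)) =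
      - Complex.exp (π * I * ((n : ℂ) + (1:ℤ) / 2) ^ 2 * τ +
      2 * π * I * ((n : ℂ) + (1:ℤ) / 2) * ((0:ℂ) + (1:ℤ) / 2)) := by
    intro n
    have h1 : Complex.exp (π * I * (((-1 - n : ℤ) : ℂ) + (1:ℤ) / 2) ^ 2 * τ +
        2 * π * I * (((-1 - n : ℤ) : ℂ) + (1:ℤ) / 2) * ((0:ℂ) + (1:ℤ) / 2)) =
        Complex.exp (↑π * I) * (Complex.exp (((-n - 1 : ℤ) : ℂ) * (2 * ↑π * I)) *
          Complex.exp (π * I * ((n : ℂ) + (1:ℤ) / 2) ^ 2 * τ +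
            2 * π * I * ((n : ℂ) + (1:ℤ) / 2) * ((0:ℂ) + (1:ℤ) / 2))) := by
      rw [← Complex.exp_add, ← Complex.exp_add]
      congr 1
      push_cast
      ring
    rw [h1, Complex.exp_int_mul_two_pi_mul_I, Complex.exp_pi_mul_I]
    ring
  have h2 : jTheta 1 1 0 τ = - jTheta 1 1 0 τ := by
    conv_lhs => rw [jTheta, ← (Equiv.subLeft (-1 : ℤ)).tsum_eq]
    rw [jTheta, ← tsum_neg]
    refine tsum_congr fun n => ?_
    simpa [Equiv.subLeft] using key n
  linear_combination h2 / 2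

lemma half_im {τ : ℂ} (hτ : 0 < τ.im) : 0 < (τ / 2).im := by
  have h : (τ / 2).im = τ.im / 2 := by
    simp [div_eq_mul_inv, Complex.mul_im]
  rw [h]; linarith

open scoped Real in
lemma thetaA {τ : ℂ} (hτ : 0 < τ.im) (s d : ℂ) :
    jTheta 0 1 s (τ / 2) * jTheta 0 0 d (τ / 2) =
      jTheta 0 1 (s + d) τ * jTheta 0 1 (s - d) τ +
      jTheta 1 1 (s + d) τ * jTheta 1 1 (s - d) τ := by
  have H := theta2_landen (half_im hτ) (s + 1 / 2) d
  rw [show 2 * (τ / 2) = τ by ring] at H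
  rw [jT01, jT00, jT01, jT01, jT11, jT11,
    show s + d + 1 / 2 = s + 1 / 2 + d by ring,
    show s - d + 1 / 2 = s + 1 / 2 - d by ring, H,
    show Complex.exp (↑π * I * (τ / 2) + 2 * ↑π * I * (s + 1 / 2)) =
      Complex.exp (↑π * I * τ / 4 + ↑π * I * (s + d + 1 / 2)) *
        Complex.exp (↑π * I * τ / 4 + ↑π * I * (s - d + 1 / 2)) from by
      rw [← Complex.exp_add]; congr 1; ring]
  ring

open scoped Real in
lemma thetaB {τ : ℂ} (hτ : 0 < τ.im) (s d : ℂ) :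
    jTheta 0 0 s (τ / 2) * jTheta 0 1 d (τ / 2) =
      jTheta 0 1 (s + d) τ * jTheta 0 1 (s - d) τ -
      jTheta 1 1 (s + d) τ * jTheta 1 1 (s - d) τ := by
  have H := theta2_landen (half_im hτ) s (d + 1 / 2)
  rw [show 2 * (τ / 2) = τ by ring] at H
  have e1 : jacobiTheta₂ (s - (d + 1 / 2)) τ = jacobiTheta₂ (s - d + 1 / 2) τ := by
    rw [show s - d + 1 / 2 = s - (d + 1 / 2) + 1 by ring, jacobiTheta₂_add_left]
  have e2 : jacobiTheta₂ (s - (d + 1 / 2) + τ / 2) τ =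
      jacobiTheta₂ (s - d + 1 / 2 + τ / 2) τ := by
    rw [show s - d + 1 / 2 + τ / 2 = s - (d + 1 / 2) + τ / 2 + 1 by ring, jacobiTheta₂_add_left]
  rw [e1, e2] at H
  have hcoef : Complex.exp (↑π * I * τ / 4 + ↑π * I * (s + (d + 1 / 2))) *
      Complex.exp (↑π * I * τ / 4 + ↑π * I * (s - d + 1 / 2)) =
      - Complex.exp (↑π * I * (τ / 2) + 2 * ↑π * I * s) := by
    rw [← Complex.exp_add, show ↑π * I * τ / 4 + ↑π * I * (s + (d + 1 / 2)) +
        (↑π * I * τ / 4 + ↑π * I * (s - d + 1 / 2)) =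
        ↑π * I * (τ / 2) + 2 * ↑π * I * s + ↑π * I from by ring, Complex.exp_add,
      Complex.exp_pi_mul_I]
    ring
  rw [jT00, jT01, jT01, jT01, jT11, jT11,
    show s + d + 1 / 2 = s + (d + 1 / 2) by ring, H]
  linear_combination (jacobiTheta₂ (s + (d + 1 / 2) + τ / 2) τ *
    jacobiTheta₂ (s - d + 1 / 2 + τ / 2) τ) * hcoef

/-- The identity
`M(u;ũ)⁻¹ σ³ M(u;ũ) = (θ₁₁(u)θ₁₁(ũ))⁻¹ [[-θ₀₁(u)θ₀₁(ũ), -θ₀₁ θ₀₁(u+ũ)],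
[θ₀₁ θ₀₁(u-ũ), θ₀₁(u)θ₀₁(ũ)]]`, valid whenever `det M(u;ũ) ≠ 0`. -/
theorem gaugeM_conj_sigma3 (τ : ℂ) (hτ : 0 < τ.im) (u utilde : ℂ)
    (hdet : (gaugeM τ u utilde).det ≠ 0) :
    (gaugeM τ u utilde)⁻¹ * (!![1, 0; 0, -1] : Matrix (Fin 2) (Fin 2) ℂ) * gaugeM τ u utilde =
      (jTheta 1 1 u τ * jTheta 1 1 utilde τ)⁻¹ •
        !![ - jTheta 0 1 u τ * jTheta 0 1 utilde τ,
            - jTheta 0 1 0 τ * jTheta 0 1 (u + utilde) τ;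
            jTheta 0 1 0 τ * jTheta 0 1 (u - utilde) τ,
            jTheta 0 1 u τ * jTheta 0 1 utilde τ] := by
  have hA := thetaA hτ ((u + utilde) / 2) ((u - utilde) / 2)
  have hB := thetaB hτ ((u + utilde) / 2) ((u - utilde) / 2)
  rw [show (u + utilde) / 2 + (u - utilde) / 2 = u by ring,
    show (u + utilde) / 2 - (u - utilde) / 2 = utilde by ring] at hA hB
  have hC1 := thetaA hτ ((u - utilde) / 2) ((u - utilde) / 2)
  rw [show (u - utilde) / 2 + (u - utilde) / 2 = u - utilde by ring,
    show (u - utilde) / 2 - (u - utilde) / 2 = 0 by ring, jTheta11_zero, mul_zero,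
    add_zero] at hC1
  have hC2 := thetaA hτ ((u + utilde) / 2) ((u + utilde) / 2)
  rw [show (u + utilde) / 2 + (u + utilde) / 2 = u + utilde by ring,
    show (u + utilde) / 2 - (u + utilde) / 2 = 0 by ring, jTheta11_zero, mul_zero,
    add_zero] at hC2
  have hQ : jTheta 1 1 u τ * jTheta 1 1 utilde τ ≠ 0 := by
    intro h0
    apply hdet
    rw [gaugeM, Matrix.det_fin_two_of]
    linear_combination hA - hB + 2 * h0
  have hMR0 : (jTheta 1 1 u τ * jTheta 1 1 utilde τ) •
      ((!![1, 0; 0, -1] : Matrix (Fin 2) (Fin 2) ℂ) * gaugeM τ u utilde) =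
      gaugeM τ u utilde *
        !![ - jTheta 0 1 u τ * jTheta 0 1 utilde τ,
            - jTheta 0 1 0 τ * jTheta 0 1 (u + utilde) τ;
            jTheta 0 1 0 τ * jTheta 0 1 (u - utilde) τ,
            jTheta 0 1 u τ * jTheta 0 1 utilde τ] := by
    ext i j
    fin_cases i <;> fin_cases j <;>
      simp [gaugeM, Matrix.mul_apply, Fin.sum_univ_two]
    · linear_combination jTheta 0 1 ((u - utilde) / 2) (τ / 2) * hA -
        jTheta 0 1 ((u + utilde) / 2) (τ / 2) * hC1
    · linear_combination jTheta 0 1 ((u - utilde) / 2) (τ / 2) * hC2 -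
        jTheta 0 1 ((u + utilde) / 2) (τ / 2) * hB
    · linear_combination jTheta 0 0 ((u + utilde) / 2) (τ / 2) * hC1 -
        jTheta 0 0 ((u - utilde) / 2) (τ / 2) * hB
    · linear_combination jTheta 0 0 ((u + utilde) / 2) (τ / 2) * hA -
        jTheta 0 0 ((u - utilde) / 2) (τ / 2) * hC2
  have hMR : (!![1, 0; 0, -1] : Matrix (Fin 2) (Fin 2) ℂ) * gaugeM τ u utilde =
      gaugeM τ u utilde * ((jTheta 1 1 u τ * jTheta 1 1 utilde τ)⁻¹ •
        !![ - jTheta 0 1 u τ * jTheta 0 1 utilde τ,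
            - jTheta 0 1 0 τ * jTheta 0 1 (u + utilde) τ;
            jTheta 0 1 0 τ * jTheta 0 1 (u - utilde) τ,
            jTheta 0 1 u τ * jTheta 0 1 utilde τ]) := by
    rw [Matrix.mul_smul, ← hMR0, smul_smul, inv_mul_cancel₀ hQ, one_smul]
  calc (gaugeM τ u utilde)⁻¹ * !![1, 0; 0, -1] * gaugeM τ u utilde
      = (gaugeM τ u utilde)⁻¹ * (!![1, 0; 0, -1] * gaugeM τ u utilde) := by
        rw [Matrix.mul_assoc]
    _ = (gaugeM τ u utilde)⁻¹ * (gaugeM τ u utilde * _) := by rw [hMR]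
    _ = ((gaugeM τ u utilde)⁻¹ * gaugeM τ u utilde) * _ := by rw [Matrix.mul_assoc]
    _ = _ := by rw [Matrix.nonsing_inv_mul _ (isUnit_iff_ne_zero.mpr hdet), Matrix.one_mul]
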